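/- Let f_1, …, f_k : ℕ → ℕ be functions given by polynomials with integer coefficients, and for each n ∈ ℕ let S_n ⊆ ℕ be the additive submonoid generated by f_1(n), …, f_k(n). Then the set of all n ∈ ℕ for which S_n is a numerical semigroup (i.e., ℕ \ S_n is finite) is eventually periodic. -/

import Mathlib

open Polynomial

/-- A set `A ⊆ ℕ` is eventually periodic if there are `N` and `p ≥ 1` such that
for all `n ≥ N`, `n ∈ A ↔ n + p ∈ A`. -/
def EvPeriodicSet (A : Set ℕ) : Prop :=
  ∃ N p : ℕ, 1 ≤ p ∧ ∀ n, N ≤ n → (n ∈ A ↔ n + p ∈ A)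

/-- The additive submonoid of `ℕ` generated by `f 0 n, …, f (k-1) n`. -/
def SG (k : ℕ) (f : Fin k → ℕ → ℕ) (n : ℕ) : AddSubmonoid ℕ :=
  AddSubmonoid.closure (Set.range fun i => f i n)

lemma finset_gcd_bezout {ι : Type*} [DecidableEq ι] (a : ι → ℕ) (s : Finset ι) :
    ∃ c : ι → ℤ, ∑ i ∈ s, c i * a i = ((s.gcd a : ℕ) : ℤ) := by
  induction s using Finset.induction_on with
  | empty => exact ⟨0, by simp⟩
  | insert _ _ hj =>
    rename_i j s ih
    obtain ⟨c, hc⟩ := ih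
    set G : ℕ := s.gcd a with hG
    refine ⟨fun i => if i = j then Int.gcdA (a j) G else Int.gcdB (a j) G * c i, ?_⟩
    rw [Finset.sum_insert hj, Finset.gcd_insert]
    have h2 : ∀ i ∈ s, (if i = j then Int.gcdA (a j) G else Int.gcdB (a j) G * c i)
        * a i = Int.gcdB (a j) G * (c i * a i) := by
      intro i hi
      rw [if_neg (by rintro rfl; exact hj hi), mul_assoc]
    rw [Finset.sum_congr rfl h2, ← Finset.mul_sum, hc]
    beta_reduce
    rw [if_pos rfl, ← hG]
    have hgcd : ((gcd (a j) G : ℕ) : ℤ) = Int.gcd ((a j : ℕ) : ℤ) ((G : ℕ) : ℤ) := by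
      rw [Int.gcd_natCast_natCast]; rfl
    rw [hgcd, Int.gcd_eq_gcd_ab]
    push_cast
    ring

lemma dvd_of_mem_closure {d : ℕ} {A : Set ℕ} (h : ∀ x ∈ A, d ∣ x) :
    ∀ m ∈ AddSubmonoid.closure A, d ∣ m := by
  intro m hm
  induction hm using AddSubmonoid.closure_induction with
  | mem x hx => exact h x hx
  | zero => exact dvd_zero d
  | add x y _ _ hx hy => exact dvd_add hx hy

lemma comb_mem_closure {ι : Type*} [Fintype ι] (a : ι → ℕ) (m : ι → ℕ) :
    ∑ i, m i * a i ∈ AddSubmonoid.closure (Set.range a) := by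
  refine AddSubmonoid.sum_mem _ (fun i _ => ?_)
  have h3 : a i ∈ AddSubmonoid.closure (Set.range a) := AddSubmonoid.subset_closure (Set.mem_range_self i)
  have := nsmul_mem h3 (m i)
  simpa [nsmul_eq_mul] using this

lemma cofinite_iff_gcd_eq_one (k : ℕ) (f : Fin k → ℕ → ℕ) (n : ℕ) :
    ((SG k f n : Set ℕ)ᶜ).Finite ↔ Finset.univ.gcd (fun i => f i n) = 1 := by
  set a : Fin k → ℕ := fun i => f i n with ha
  constructor
  · intro hfin
    by_contra hd
    set d : ℕ := Finset.univ.gcd a with hdd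
    have hdvd : ∀ m ∈ SG k f n, d ∣ m := by
      apply dvd_of_mem_closure
      rintro x ⟨i, rfl⟩
      exact Finset.gcd_dvd (Finset.mem_univ i)
    rcases Nat.eq_zero_or_pos d with h0 | hpos
    · refine Set.infinite_of_injective_forall_mem (f := fun j : ℕ => j + 1) ?_ ?_ hfin
      · intro u v huv; simpa using huv
      · intro j hj
        have h2 := hdvd _ hj
        rw [h0, zero_dvd_iff] at h2
        exact Nat.succ_ne_zero j h2
    · have hd2 : 2 ≤ d := by omega
      refine Set.infinite_of_injective_forall_mem (f := fun j : ℕ => j * d + 1) ?_ ?_ hfin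
      · intro u v huv
        simp only [] at huv
        exact Nat.eq_of_mul_eq_mul_right hpos (by omega)
      · intro j hj
        have hd1 : d ∣ 1 := (Nat.dvd_add_right ⟨j, mul_comm j d⟩).mp (hdvd _ hj)
        exact hd (Nat.dvd_one.mp hd1)
  · intro h1
    obtain ⟨c, hc⟩ := finset_gcd_bezout a Finset.univ
    rw [h1] at hc
    push_cast at hc
    set P : Fin k → ℕ := fun i => (c i).toNat with hP
    set Q : Fin k → ℕ := fun i => (-(c i)).toNat with hQ
    set x : ℕ := ∑ i, Q i * a i with hx
    set y : ℕ := ∑ i, P i * a i with hy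
    have hxS : x ∈ SG k f n := comb_mem_closure a Q
    have hyS : y ∈ SG k f n := comb_mem_closure a P
    have hxy : y = x + 1 := by
      have hyx : (y : ℤ) - (x : ℤ) = 1 := by
        rw [hx, hy]
        push_cast
        rw [← Finset.sum_sub_distrib, ← hc]
        refine Finset.sum_congr rfl (fun i _ => ?_)
        have hPQ : ((P i) : ℤ) - ((Q i) : ℤ) = c i := by simp only [hP, hQ]; omega
        rw [← hPQ]; ring
      omega
    have hnsmul : ∀ u : ℕ, u ∈ SG k f n → ∀ v : ℕ, v * u ∈ SG k f n := by
      intro u hu v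
      have hu' : u ∈ SG k f n := hu
      simpa [nsmul_eq_mul] using nsmul_mem hu' v
    rcases Nat.eq_zero_or_pos x with h0 | hxpos
    · have h1S : (1 : ℕ) ∈ SG k f n := by
        have : y = 1 := by omega
        exact this ▸ hyS
      refine Set.Finite.subset (Set.finite_empty) (fun m hm => absurd ?_ hm)
      have := hnsmul 1 h1S m
      simpa using this
    · have hsub : ((SG k f n : Set ℕ)ᶜ) ⊆ Set.Iio (x * x) := by
        intro m hm
        simp only [Set.mem_Iio]
        by_contra hge
        push_neg at hge
        apply hm
        set q : ℕ := m / x with hq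
        set r : ℕ := m % x with hr
        have hrx : r < x := Nat.mod_lt _ hxpos
        have hqr : r ≤ q := by
          have : x ≤ q := (Nat.le_div_iff_mul_le hxpos).mpr hge
          omega
        have hmqr : m = q * x + r := by rw [hq, hr, Nat.mul_comm]; exact (Nat.div_add_mod m x).symm
        have hm' : m = (q - r) * x + r * y := by
          rw [hxy, hmqr]
          obtain ⟨e, he⟩ := Nat.exists_eq_add_of_le hqr
          rw [he]
          rw [Nat.add_sub_cancel_left]
          ring
        show m ∈ SG k f n
        rw [hm']
        exact AddSubmonoid.add_mem _ (hnsmul x hxS _) (hnsmul y hyS _)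
      exact (Set.finite_Iio _).subset hsub

theorem stmt0 (k : ℕ) (hk : 1 ≤ k) (f : Fin k → ℕ → ℕ)
    (hf : ∀ i, ∃ p : Polynomial ℤ, ∀ n : ℕ, (f i n : ℤ) = p.eval (n : ℤ)) :
    EvPeriodicSet {n : ℕ | ((SG k f n : Set ℕ)ᶜ).Finite} := by
  choose p hp using hf
  set D : ℕ → ℕ := fun n => Finset.univ.gcd (fun i => f i n) with hD
  have hA : ∀ n : ℕ, (((SG k f n : Set ℕ)ᶜ).Finite ↔ D n = 1) :=
    fun n => cofinite_iff_gcd_eq_one k f n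
  have hDdvd : ∀ n i, (D n : ℤ) ∣ (p i).eval (n : ℤ) := by
    intro n i
    rw [← hp i n]
    exact Int.natCast_dvd_natCast.mpr (Finset.gcd_dvd (Finset.mem_univ i))
  set q : Fin k → Polynomial ℚ := fun i => (p i).map (Int.castRingHom ℚ) with hq
  have hcastn : ∀ n : ℕ, ((n : ℕ) : ℚ) = (((n : ℕ) : ℤ) : ℚ) := by intro n; push_cast; ring
  have hqeval : ∀ (i : Fin k) (n : ℕ),
      (q i).eval ((n : ℕ) : ℚ) = (((p i).eval (n : ℤ) : ℤ) : ℚ) := by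
    intro i n
    have h1 := Polynomial.eval_intCast_map (Int.castRingHom ℚ) (p i) (n : ℤ)
    rw [hq, hcastn n, h1]
    simp
  obtain ⟨g, hg⟩ := Submodule.IsPrincipal.principal (Ideal.span (Set.range q))
  by_cases hu : IsUnit g
  · -- Bezout identity gives a uniform bound m on D n, and exact periodicity with period |m|.
    have htop : Ideal.span (Set.range q) = ⊤ := by
      rw [hg]; exact Ideal.span_singleton_eq_top.mpr hu
    have h1 : (1 : Polynomial ℚ) ∈ Ideal.span (Set.range q) := htop ▸ Submodule.mem_top
    obtain ⟨c, hc⟩ := (Submodule.mem_span_range_iff_exists_fun _).mp h1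
    have hnorm := fun i =>
      IsLocalization.integerNormalization_map_to_map (nonZeroDivisors ℤ) (c i)
    choose b hb using hnorm
    set C : Fin k → Polynomial ℤ :=
      fun i => IsLocalization.integerNormalization (nonZeroDivisors ℤ) (c i) with hC
    set m : ℤ := ∏ i, (b i : ℤ) with hm
    have hm0 : m ≠ 0 :=
      Finset.prod_ne_zero_iff.mpr fun i _ => nonZeroDivisors.coe_ne_zero (b i)
    have key : ∀ n : ℕ, (D n : ℤ) ∣ m := by
      intro n
      have hceval : ∑ i, (c i).eval ((n : ℕ) : ℚ) * (q i).eval ((n : ℕ) : ℚ) = 1 := by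
        have h2 := congrArg (Polynomial.eval ((n : ℕ) : ℚ)) hc
        simpa [Polynomial.eval_finset_sum, smul_eq_mul] using h2
      have hCeval : ∀ i, (((C i).eval (n : ℤ) : ℤ) : ℚ)
          = ((b i : ℤ) : ℚ) * (c i).eval ((n : ℕ) : ℚ) := by
        intro i
        have h3 := congrArg (Polynomial.eval ((n : ℕ) : ℚ)) (hb i)
        rw [Polynomial.eval_smul] at h3
        have h4 : ((C i).map (algebraMap ℤ ℚ)).eval ((n : ℕ) : ℚ)
            = (((C i).eval (n : ℤ) : ℤ) : ℚ) := by
          have h5 := Polynomial.eval_intCast_map (algebraMap ℤ ℚ) (C i) (n : ℤ)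
          rw [hcastn n, h5]
          simp
        rw [h4] at h3
        rw [h3, zsmul_eq_mul]
      set e : Fin k → ℤ :=
        fun i => (∏ j ∈ Finset.univ.erase i, (b j : ℤ)) * (C i).eval (n : ℤ) with he
      have hint : ∑ i, e i * ((p i).eval (n : ℤ)) = m := by
        have hcast : ((∑ i, e i * ((p i).eval (n : ℤ)) : ℤ) : ℚ) = ((m : ℤ) : ℚ) := by
          push_cast
          calc ∑ i, ((e i : ℤ) : ℚ) * (((p i).eval (n : ℤ) : ℤ) : ℚ)
              = ∑ i, ((m : ℤ) : ℚ) * ((c i).eval ((n : ℕ) : ℚ) * (q i).eval ((n : ℕ) : ℚ)) := by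
                refine Finset.sum_congr rfl fun i _ => ?_
                rw [← hqeval i n, he]
                push_cast
                rw [hCeval i]
                have hprod : (∏ j ∈ Finset.univ.erase i, ((b j : ℤ) : ℚ)) * ((b i : ℤ) : ℚ)
                    = ((m : ℤ) : ℚ) := by
                  rw [hm]
                  push_cast
                  rw [Finset.prod_erase_mul _ _ (Finset.mem_univ i)]
                linear_combination ((c i).eval ((n : ℕ) : ℚ) * (q i).eval ((n : ℕ) : ℚ)) * hprod
            _ = ((m : ℤ) : ℚ) := by rw [← Finset.mul_sum, hceval, mul_one]
        exact_mod_cast hcast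
      rw [← hint]
      exact Finset.dvd_sum fun i _ => Dvd.dvd.mul_left (hDdvd n i) _
    set Pd : ℕ := m.natAbs with hPd
    have hPd1 : 1 ≤ Pd := by
      rcases Nat.eq_zero_or_pos Pd with h0 | h1
      · exact absurd (Int.natAbs_eq_zero.mp h0) hm0
      · exact h1
    have hDdvdPd : ∀ n : ℕ, (D n : ℤ) ∣ (Pd : ℤ) :=
      fun n => Int.dvd_natAbs.mpr (key n)
    have hstep : ∀ u v : ℕ, ((u : ℤ) - (v : ℤ) = Pd ∨ (v : ℤ) - (u : ℤ) = Pd) →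
        D u ∣ D v := by
      intro u v hcase
      apply Finset.dvd_gcd
      intro i _
      have hsd := Polynomial.sub_dvd_eval_sub (v : ℤ) (u : ℤ) (p i)
      have h5 : (D u : ℤ) ∣ (v : ℤ) - (u : ℤ) := by
        rcases hcase with h | h
        · rw [show (v : ℤ) - u = -(Pd : ℤ) by omega]; exact (hDdvdPd u).neg_right
        · rw [h]; exact hDdvdPd u
      have h7 : (D u : ℤ) ∣ (p i).eval (v : ℤ) - (p i).eval (u : ℤ) := h5.trans hsd
      have h6 : (D u : ℤ) ∣ (p i).eval (v : ℤ) := by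
        have h8 := dvd_add h7 (hDdvd u i)
        simpa using h8
      have h9 : (D u : ℤ) ∣ ((f i v : ℕ) : ℤ) := by rw [hp i v]; exact h6
      exact Int.natCast_dvd_natCast.mp h9
    have hper : ∀ n : ℕ, D n = D (n + Pd) :=
      fun n => Nat.dvd_antisymm
        (hstep n (n + Pd) (Or.inr (by push_cast; ring)))
        (hstep (n + Pd) n (Or.inl (by push_cast; ring)))
    refine ⟨0, Pd, hPd1, fun n _ => ?_⟩
    simp only [Set.mem_setOf_eq, hA]
    rw [hper n]
  · -- g is not a unit: the cofinite set is eventually empty.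
    suffices hN : ∃ N : ℕ, ∀ n ≥ N, D n ≠ 1 by
      obtain ⟨N, hN⟩ := hN
      refine ⟨N, 1, le_refl 1, fun n hn => ?_⟩
      simp only [Set.mem_setOf_eq, hA]
      exact iff_of_false (hN n hn) (hN (n + 1) (by omega))
    by_cases hg0 : g = 0
    · -- all polynomials are zero
      have hq0 : ∀ i, q i = 0 := by
        intro i
        have h2 : q i ∈ Ideal.span (Set.range q) := Ideal.subset_span (Set.mem_range_self i)
        rw [hg, hg0] at h2
        exact zero_dvd_iff.mp (Ideal.mem_span_singleton.mp h2)
      have hf0 : ∀ i n, f i n = 0 := by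
        intro i n
        have h3 := hqeval i n
        rw [hq0 i] at h3
        simp only [Polynomial.eval_zero] at h3
        have h4 : (p i).eval (n : ℤ) = 0 := by exact_mod_cast h3.symm
        have h5 := hp i n
        rw [h4] at h5
        exact_mod_cast h5
      refine ⟨0, fun n _ => ?_⟩
      have : D n = 0 := Finset.gcd_eq_zero_iff.mpr fun i _ => hf0 i n
      omega
    · -- g nonconstant
      have hdeg : 0 < g.degree := by
        rcases lt_or_ge 0 g.degree with h | h
        · exact h
        · exfalso
          apply hu
          have hgC := Polynomial.eq_C_of_degree_le_zero h
          rw [hgC]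
          refine Polynomial.isUnit_C.mpr (isUnit_iff_ne_zero.mpr fun h0 => hg0 ?_)
          rw [hgC, h0, map_zero]
      have hgdvd : ∀ i, g ∣ q i := by
        intro i
        have h2 : q i ∈ Ideal.span (Set.range q) := Ideal.subset_span (Set.mem_range_self i)
        rw [hg] at h2
        exact (Ideal.mem_span_singleton).mp h2
      choose h hh using hgdvd
      obtain ⟨bG, hbG⟩ := IsLocalization.integerNormalization_map_to_map (nonZeroDivisors ℤ) g
      set G : Polynomial ℤ := IsLocalization.integerNormalization (nonZeroDivisors ℤ) g with hG
      choose bH hbH using fun i =>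
        IsLocalization.integerNormalization_map_to_map (nonZeroDivisors ℤ) (h i)
      set H : Fin k → Polynomial ℤ :=
        fun i => IsLocalization.integerNormalization (nonZeroDivisors ℤ) (h i) with hH
      set M : ℤ := ∏ i, ((bG : ℤ) * (bH i : ℤ)) with hM
      have hM0 : M ≠ 0 := Finset.prod_ne_zero_iff.mpr fun i _ =>
        mul_ne_zero (nonZeroDivisors.coe_ne_zero bG) (nonZeroDivisors.coe_ne_zero (bH i))
      -- evaluation identities
      have hGeval : ∀ n : ℕ, ((G.eval (n : ℤ) : ℤ) : ℚ) = ((bG : ℤ) : ℚ) * g.eval ((n : ℕ) : ℚ) := by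
        intro n
        have h3 := congrArg (Polynomial.eval ((n : ℕ) : ℚ)) hbG
        rw [Polynomial.eval_smul] at h3
        have h4 := Polynomial.eval_intCast_map (algebraMap ℤ ℚ) G (n : ℤ)
        rw [hcastn n, h4] at h3
        rw [← hcastn n] at h3
        simp only [eq_intCast, zsmul_eq_mul] at h3
        exact_mod_cast h3
      have hHeval : ∀ (i : Fin k) (n : ℕ),
          (((H i).eval (n : ℤ) : ℤ) : ℚ) = ((bH i : ℤ) : ℚ) * (h i).eval ((n : ℕ) : ℚ) := by
        intro i n
        have h3 := congrArg (Polynomial.eval ((n : ℕ) : ℚ)) (hbH i)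
        rw [Polynomial.eval_smul] at h3
        have h4 := Polynomial.eval_intCast_map (algebraMap ℤ ℚ) (H i) (n : ℤ)
        rw [hcastn n, h4] at h3
        rw [← hcastn n] at h3
        simp only [eq_intCast, zsmul_eq_mul] at h3
        exact_mod_cast h3
      have hGdvd : ∀ (n : ℕ) (i : Fin k),
          G.eval (n : ℤ) ∣ ((bG : ℤ) * (bH i : ℤ)) * (p i).eval (n : ℤ) := by
        intro n i
        refine ⟨(H i).eval (n : ℤ), ?_⟩
        have hcast : ((G.eval (n : ℤ) * (H i).eval (n : ℤ) : ℤ) : ℚ)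
            = ((((bG : ℤ) * (bH i : ℤ)) * (p i).eval (n : ℤ) : ℤ) : ℚ) := by
          push_cast
          rw [hGeval n, hHeval i n, ← hqeval i n, hh i, Polynomial.eval_mul]
          ring
        have hres : G.eval (n : ℤ) * (H i).eval (n : ℤ)
            = ((bG : ℤ) * (bH i : ℤ)) * (p i).eval (n : ℤ) := by exact_mod_cast hcast
        exact hres.symm
      -- degree of G is positive
      have hGdeg : 0 < G.degree := by
        have hinj : Function.Injective (algebraMap ℤ ℚ) := fun a b hab => by exact_mod_cast hab
        have h2 : (G.map (algebraMap ℤ ℚ)).degree = G.degree :=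
          Polynomial.degree_map_eq_of_injective hinj G
        rw [hbG] at h2
        have h3 : ((bG : ℤ) • g) = Polynomial.C (((bG : ℤ) : ℚ)) * g := by
          rw [← Polynomial.smul_eq_C_mul]
          ext mm
          simp [Polynomial.coeff_smul, zsmul_eq_mul]
        rw [h3, Polynomial.degree_C_mul (by exact_mod_cast nonZeroDivisors.coe_ne_zero bG)] at h2
        rw [← h2]
        exact hdeg
      -- growth of |G| along ℕ
      have hGrdeg : 0 < (G.map (Int.castRingHom ℝ)).degree := by
        have hinj : Function.Injective (Int.castRingHom ℝ) :=
          Int.cast_injective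
        rw [Polynomial.degree_map_eq_of_injective hinj]
        exact hGdeg
      have htend : Filter.Tendsto (fun x : ℝ => |(G.map (Int.castRingHom ℝ)).eval x|)
          Filter.atTop Filter.atTop :=
        Polynomial.abs_tendsto_atTop _ hGrdeg
      have htend2 : Filter.Tendsto (fun n : ℕ => |(G.map (Int.castRingHom ℝ)).eval ((n : ℕ) : ℝ)|)
          Filter.atTop Filter.atTop := htend.comp tendsto_natCast_atTop_atTop
      have hev : ∀ᶠ n : ℕ in Filter.atTop,
          ((M.natAbs : ℕ) : ℝ) < |(G.map (Int.castRingHom ℝ)).eval ((n : ℕ) : ℝ)| :=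
        htend2.eventually_gt_atTop _
      obtain ⟨N, hN⟩ := Filter.eventually_atTop.mp hev
      refine ⟨N, fun n hn hDn1 => ?_⟩
      have hgcd1 : Finset.univ.gcd (fun i => f i n) = 1 := hDn1
      obtain ⟨c, hc⟩ := finset_gcd_bezout (fun i => f i n) Finset.univ
      rw [hgcd1] at hc
      push_cast at hc
      have hGM : G.eval (n : ℤ) ∣ M := by
        have h2 : ∀ i : Fin k, G.eval (n : ℤ) ∣ M * (p i).eval (n : ℤ) := fun i =>
          (hGdvd n i).trans
            (mul_dvd_mul_right (Finset.dvd_prod_of_mem _ (Finset.mem_univ i)) _)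
        have h3 : M = ∑ i, c i * (M * (p i).eval (n : ℤ)) := by
          have h4 : ∑ i, c i * (M * (p i).eval (n : ℤ))
              = M * ∑ i, c i * ((f i n : ℕ) : ℤ) := by
            rw [Finset.mul_sum]
            refine Finset.sum_congr rfl fun i _ => ?_
            rw [hp i n]
            ring
          rw [h4, hc, mul_one]
        rw [h3]
        exact Finset.dvd_sum fun i _ => (h2 i).mul_left _
      have hle : |G.eval (n : ℤ)| ≤ |M| :=
        Int.le_of_dvd (abs_pos.mpr hM0) ((abs_dvd _ _).mpr (hGM.trans (self_dvd_abs M)))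
      have hlt : ((|M| : ℤ) : ℝ) < ((|G.eval (n : ℤ)| : ℤ) : ℝ) := by
        have h5 := hN n hn
        have h6 : (G.map (Int.castRingHom ℝ)).eval ((n : ℕ) : ℝ)
            = ((G.eval (n : ℤ) : ℤ) : ℝ) := by
          have h7 := Polynomial.eval_intCast_map (Int.castRingHom ℝ) G ((n : ℕ) : ℤ)
          rw [show ((n : ℕ) : ℝ) = (((n : ℕ) : ℤ) : ℝ) from by push_cast; ring, h7]
          simp
        rw [h6] at h5
        have h8 : ((M.natAbs : ℕ) : ℝ) = ((|M| : ℤ) : ℝ) := by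
          rw [Nat.cast_natAbs, Int.cast_abs]
        rw [h8] at h5
        calc ((|M| : ℤ) : ℝ) < |((G.eval (n : ℤ) : ℤ) : ℝ)| := h5
          _ = ((|G.eval (n : ℤ)| : ℤ) : ℝ) := by push_cast; ring
      have : |M| < |G.eval (n : ℤ)| := by exact_mod_cast hlt
      omega
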